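/- For n ≥ 0, the number of Fishburn permutations of length n avoiding the classical patterns 321, 3142, and 2143 equals C(n,2) + 1. -/

import Mathlib

set_option maxRecDepth 4000

/-- A permutation `π` of `Fin n` contains the classical pattern `p` (given as a
function `Fin k → ℕ` listing the pattern's entries). -/
def Contains {n k : ℕ} (π : Equiv.Perm (Fin n)) (p : Fin k → ℕ) : Prop :=
  ∃ f : Fin k → Fin n, StrictMono f ∧ ∀ i j, p i < p j ↔ π (f i) < π (f j)

/-- Classical pattern avoidance. -/
def Avoids {n k : ℕ} (π : Equiv.Perm (Fin n)) (p : Fin k → ℕ) : Prop :=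
  ¬ Contains π p

/-- A permutation is Fishburn if there are no indices `i < j` with
`π i, π (i+1), π j` forming a 231 pattern and `π i = π j + 1`. -/
def IsFishburn {n : ℕ} (π : Equiv.Perm (Fin n)) : Prop :=
  ¬ ∃ (i j : ℕ) (hij : i + 1 < j) (hj : j < n),
      π ⟨i, by omega⟩ < π ⟨i + 1, by omega⟩ ∧
      π ⟨j, hj⟩ < π ⟨i, by omega⟩ ∧
      (π ⟨i, by omega⟩ : ℕ) = (π ⟨j, hj⟩ : ℕ) + 1

/-! Auxiliary material -/

def sig (n i j : ℕ) (hij : i < j) (hj : j < n) : Equiv.Perm (Fin n) where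
  toFun k := if (k:ℕ) = i then ⟨j, hj⟩ else
    if h : i < (k:ℕ) ∧ (k:ℕ) ≤ j then ⟨(k:ℕ)-1, by have := k.isLt; omega⟩ else k
  invFun k := if (k:ℕ) = j then ⟨i, by omega⟩ else
    if h : i ≤ (k:ℕ) ∧ (k:ℕ) < j then ⟨(k:ℕ)+1, by omega⟩ else k
  left_inv := by
    intro k
    have hk := k.isLt
    apply Fin.ext
    simp only
    split_ifs <;> simp_all <;> omega
  right_inv := by
    intro k
    have hk := k.isLt
    apply Fin.ext
    simp only
    split_ifs <;> simp_all <;> omega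

lemma sig_val (n i j : ℕ) (hij : i < j) (hj : j < n) (k : Fin n) :
    ((sig n i j hij hj) k : ℕ) =
      if (k:ℕ) = i then j else if i < (k:ℕ) ∧ (k:ℕ) ≤ j then (k:ℕ)-1 else (k:ℕ) := by
  simp only [sig, Equiv.coe_fn_mk]
  split_ifs <;> rfl

/-- In `sig n i j`, any inversion has its left leg at position `i` and right leg in `(i, j]`. -/
lemma sig_inversion {n i j : ℕ} (hij : i < j) (hj : j < n) {a b : Fin n} (hab : a < b)
    (hba : ((sig n i j hij hj) b : ℕ) < ((sig n i j hij hj) a : ℕ)) :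
    (a:ℕ) = i ∧ i < (b:ℕ) ∧ (b:ℕ) ≤ j := by
  have ha := sig_val n i j hij hj a
  have hb := sig_val n i j hij hj b
  have h1 := a.isLt
  have h2 := b.isLt
  have h3 : (a:ℕ) < (b:ℕ) := hab
  split_ifs at ha hb <;> omega

lemma contains321 {n : ℕ} (π : Equiv.Perm (Fin n)) (a b c : Fin n) (hab : a < b) (hbc : b < c)
    (h1 : (π c:ℕ) < (π b:ℕ)) (h2 : (π b:ℕ) < (π a:ℕ)) : Contains π ![3,2,1] := by
  have e1 : (⟨2, by omega⟩ : Fin 3) = 2 := rfl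
  refine ⟨![a,b,c], ?_, ?_⟩
  · intro x y hxy
    fin_cases x <;> fin_cases y <;> simp_all <;>
      first
      | exact hab | exact hbc | exact hab.trans hbc
      | exact absurd hxy (by simp)
  · intro x y
    fin_cases x <;> fin_cases y <;>
      simp only [e1, Matrix.cons_val_zero, Matrix.cons_val_one, Matrix.head_cons,
        Matrix.cons_val_two, Matrix.tail_cons, Fin.lt_def, Fin.mk_zero, Fin.mk_one] <;>
      omega

lemma contains4 {n : ℕ} (π : Equiv.Perm (Fin n)) (p : Fin 4 → ℕ) (a b c d : Fin n)
    (hab : a < b) (hbc : b < c) (hcd : c < d)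
    (h : ∀ x y : Fin 4, p x < p y ↔ (π (![a,b,c,d] x) : ℕ) < (π (![a,b,c,d] y) : ℕ)) :
    Contains π p := by
  refine ⟨![a,b,c,d], ?_, ?_⟩
  · intro x y hxy
    fin_cases x <;> fin_cases y <;> simp_all <;>
      first
      | exact hab | exact hbc | exact hcd
      | exact hab.trans hbc | exact hbc.trans hcd | exact (hab.trans hbc).trans hcd
      | exact absurd hxy (by simp)
  · intro x y
    rw [Fin.lt_def]
    exact h x y

lemma contains3142 {n : ℕ} (π : Equiv.Perm (Fin n)) (a b c d : Fin n)
    (hab : a < b) (hbc : b < c) (hcd : c < d)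
    (h1 : (π b:ℕ) < (π d:ℕ)) (h2 : (π d:ℕ) < (π a:ℕ)) (h3 : (π a:ℕ) < (π c:ℕ)) :
    Contains π ![3,1,4,2] := by
  have e2 : (⟨2, by omega⟩ : Fin 4) = 2 := rfl
  have e3 : (⟨3, by omega⟩ : Fin 4) = 3 := rfl
  refine contains4 π _ a b c d hab hbc hcd ?_
  intro x y
  fin_cases x <;> fin_cases y <;>
    simp only [e2, e3, Matrix.cons_val_zero, Matrix.cons_val_one, Matrix.head_cons,
      Matrix.cons_val_two, Matrix.tail_cons, Matrix.cons_val_three, Fin.mk_zero, Fin.mk_one] <;>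
    omega

lemma contains2143 {n : ℕ} (π : Equiv.Perm (Fin n)) (a b c d : Fin n)
    (hab : a < b) (hbc : b < c) (hcd : c < d)
    (h1 : (π b:ℕ) < (π a:ℕ)) (h2 : (π a:ℕ) < (π d:ℕ)) (h3 : (π d:ℕ) < (π c:ℕ)) :
    Contains π ![2,1,4,3] := by
  have e2 : (⟨2, by omega⟩ : Fin 4) = 2 := rfl
  have e3 : (⟨3, by omega⟩ : Fin 4) = 3 := rfl
  refine contains4 π _ a b c d hab hbc hcd ?_
  intro x y
  fin_cases x <;> fin_cases y <;>
    simp only [e2, e3, Matrix.cons_val_zero, Matrix.cons_val_one, Matrix.head_cons,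
      Matrix.cons_val_two, Matrix.tail_cons, Matrix.cons_val_three, Fin.mk_zero, Fin.mk_one] <;>
    omega

lemma one_mem {n : ℕ} :
    IsFishburn (1 : Equiv.Perm (Fin n)) ∧ Avoids (1 : Equiv.Perm (Fin n)) ![3, 2, 1] ∧
      Avoids (1 : Equiv.Perm (Fin n)) ![3, 1, 4, 2] ∧ Avoids (1 : Equiv.Perm (Fin n)) ![2, 1, 4, 3] := by
  refine ⟨?_, ?_, ?_, ?_⟩
  · rintro ⟨i, j, hij, hj, -, hlt, -⟩
    simp only [Equiv.Perm.coe_one, id_eq, Fin.lt_def] at hlt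
    omega
  · rintro ⟨f, hf, hiff⟩
    have h := (hiff 1 0).mp (by norm_num)
    have h2 : f 0 < f 1 := hf (by norm_num)
    simp only [Equiv.Perm.coe_one, id_eq] at h
    exact absurd (h.trans h2) (lt_irrefl _)
  · rintro ⟨f, hf, hiff⟩
    have h := (hiff 1 0).mp (by norm_num)
    have h2 : f 0 < f 1 := hf (by norm_num)
    simp only [Equiv.Perm.coe_one, id_eq] at h
    exact absurd (h.trans h2) (lt_irrefl _)
  · rintro ⟨f, hf, hiff⟩
    have h := (hiff 1 0).mp (by norm_num)
    have h2 : f 0 < f 1 := hf (by norm_num)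
    simp only [Equiv.Perm.coe_one, id_eq] at h
    exact absurd (h.trans h2) (lt_irrefl _)

set_option maxHeartbeats 2000000 in
lemma sig_mem {n i j : ℕ} (hij : i < j) (hj : j < n) :
    IsFishburn (sig n i j hij hj) ∧ Avoids (sig n i j hij hj) ![3, 2, 1] ∧
      Avoids (sig n i j hij hj) ![3, 1, 4, 2] ∧ Avoids (sig n i j hij hj) ![2, 1, 4, 3] := by
  refine ⟨?_, ?_, ?_, ?_⟩
  · rintro ⟨a, b, hab, hb, hasc, hlt, -⟩
    have key := sig_inversion hij hj (a := ⟨a, by omega⟩) (b := ⟨b, hb⟩)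
      (Fin.mk_lt_mk.mpr (by omega)) (Fin.lt_def.mp hlt)
    have hai : a = i := key.1
    have hasc' := Fin.lt_def.mp hasc
    rw [sig_val, sig_val] at hasc'
    simp only at hasc'
    split_ifs at hasc' <;> omega
  · rintro ⟨f, hf, hiff⟩
    have h1 := Fin.lt_def.mp ((hiff 1 0).mp (by norm_num))
    have h2 := Fin.lt_def.mp ((hiff 2 1).mp (by decide))
    have k1 := sig_inversion hij hj (hf (show (0:Fin 3) < 1 by decide)) h1
    have k2 := sig_inversion hij hj (hf (show (1:Fin 3) < 2 by decide)) h2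
    have h3 : (f 0 : ℕ) < (f 1 : ℕ) := hf (show (0:Fin 3) < 1 by decide)
    omega
  · rintro ⟨f, hf, hiff⟩
    have h1 := Fin.lt_def.mp ((hiff 1 0).mp (by norm_num))
    have h2 := Fin.lt_def.mp ((hiff 3 2).mp (by decide))
    have k1 := sig_inversion hij hj (hf (show (0:Fin 4) < 1 by decide)) h1
    have k2 := sig_inversion hij hj (hf (show (2:Fin 4) < 3 by decide)) h2
    have h3 : (f 0 : ℕ) < (f 2 : ℕ) := hf (show (0:Fin 4) < 2 by decide)
    omega
  · rintro ⟨f, hf, hiff⟩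
    have h1 := Fin.lt_def.mp ((hiff 1 0).mp (by norm_num))
    have h2 := Fin.lt_def.mp ((hiff 3 2).mp (by decide))
    have k1 := sig_inversion hij hj (hf (show (0:Fin 4) < 1 by decide)) h1
    have k2 := sig_inversion hij hj (hf (show (2:Fin 4) < 3 by decide)) h2
    have h3 : (f 0 : ℕ) < (f 2 : ℕ) := hf (show (0:Fin 4) < 2 by decide)
    omega

lemma val_congr {n : ℕ} (π : Equiv.Perm (Fin n)) {a b : ℕ} (ha : a < n) (hb : b < n)
    (h : a = b) : (π ⟨a, ha⟩ : ℕ) = (π ⟨b, hb⟩ : ℕ) := by subst h; rfl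

lemma mem_char {n : ℕ} (π : Equiv.Perm (Fin n))
    (hF : IsFishburn π) (h321 : Avoids π ![3,2,1]) (h3142 : Avoids π ![3,1,4,2])
    (h2143 : Avoids π ![2,1,4,3]) :
    π = 1 ∨ ∃ (i j : ℕ) (hij : i < j) (hj : j < n), π = sig n i j hij hj := by
  classical
  by_cases hone : π = 1
  · exact Or.inl hone
  right
  have inj : ∀ (a b : ℕ) (ha : a < n) (hb : b < n),
      (π ⟨a, ha⟩ : ℕ) = (π ⟨b, hb⟩ : ℕ) → a = b := by
    intro a b ha hb h
    have h2 := π.injective (Fin.ext h)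
    exact congrArg Fin.val h2
  have hex : ∃ k : ℕ, ∃ hk : k < n, (π ⟨k, hk⟩ : ℕ) ≠ k := by
    by_contra hc
    push_neg at hc
    apply hone
    ext x
    exact hc x.val x.isLt
  obtain ⟨i, hin, hine, claimA⟩ : ∃ i, ∃ hin : i < n, (π ⟨i, hin⟩ : ℕ) ≠ i ∧
      ∀ k, ∀ hk : k < n, k < i → (π ⟨k, hk⟩ : ℕ) = k := by
    obtain ⟨hin, hine⟩ := Nat.find_spec hex
    refine ⟨Nat.find hex, hin, hine, ?_⟩
    intro k hk hki
    by_contra hc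
    exact (Nat.find_min hex hki) ⟨hk, hc⟩
  obtain ⟨j, hjn, hj_def⟩ : ∃ j, ∃ hjn : j < n, (π ⟨i, hin⟩ : ℕ) = j :=
    ⟨(π ⟨i, hin⟩ : ℕ), (π ⟨i, hin⟩).isLt, rfl⟩
  have hij : i < j := by
    rcases lt_trichotomy i j with h | h | h
    · exact h
    · exact absurd (by omega : (π ⟨i, hin⟩ : ℕ) = i) hine
    · exfalso
      have h1 := claimA j hjn h
      have h2 := inj j i hjn hin (by omega)
      omega
  have loc : ∀ (v : ℕ) (hv : v < n), ∃ (r : ℕ) (hr : r < n), (π ⟨r, hr⟩ : ℕ) = v := by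
    intro v hv
    refine ⟨(π.symm ⟨v, hv⟩ : ℕ), (π.symm ⟨v, hv⟩).isLt, ?_⟩
    rw [Fin.eta, Equiv.apply_symm_apply]
  -- Claim C: positions in (i, j] carry value (position - 1)
  have claimC : ∀ m, ∀ hm : m < n, i < m → m ≤ j → (π ⟨m, hm⟩ : ℕ) = m - 1 := by
    intro m
    induction m using Nat.strong_induction_on with
    | _ m IH =>
    intro hm him hmj
    have hwn : (π ⟨m, hm⟩ : ℕ) < n := (π ⟨m, hm⟩).isLt
    have hwj : (π ⟨m, hm⟩ : ℕ) ≠ j := by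
      intro h
      have h2 := inj m i hm hin (by omega)
      omega
    -- the value at position m is at least m - 1
    have hw1 : m - 1 ≤ (π ⟨m, hm⟩ : ℕ) := by
      by_contra hc
      push_neg at hc
      rcases Nat.lt_or_ge (π ⟨m, hm⟩ : ℕ) i with hwi | hwi
      · have h1 := claimA _ hwn hwi
        have h2 := inj _ m hwn hm h1
        omega
      · have hvn : (π ⟨m, hm⟩ : ℕ) + 1 < n := by omega
        have h1 := IH ((π ⟨m, hm⟩ : ℕ) + 1) (by omega) hvn (by omega) (by omega)
        have h2 := inj _ m hvn hm (by omega)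
        omega
    by_cases hwm : (π ⟨m, hm⟩ : ℕ) = m - 1
    · exact hwm
    have hwm' : m ≤ (π ⟨m, hm⟩ : ℕ) := by omega
    -- the value m - 1 sits at some position r > m
    obtain ⟨r, hrn, hr⟩ := loc (m - 1) (by omega)
    have hrm : m < r := by
      by_contra hcon
      push_neg at hcon
      have htri : r < i ∨ r = i ∨ (i < r ∧ r < m) ∨ r = m := by omega
      rcases htri with h | h | ⟨h1, h2⟩ | h
      · have h1 := claimA r hrn h
        omega
      · have h1 := val_congr π hrn hin h
        omega
      · have h3 := IH r h2 hrn h1 (by omega)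
        omega
      · have h1 := val_congr π hrn hm h
        omega
    rcases Nat.lt_or_ge (π ⟨m, hm⟩ : ℕ) j with hcase | hcase
    · -- 321 pattern at i < m < r
      exact absurd (contains321 π ⟨i, hin⟩ ⟨m, hm⟩ ⟨r, hrn⟩ (Fin.mk_lt_mk.mpr (by omega))
        (Fin.mk_lt_mk.mpr (by omega)) (by omega) (by omega)) h321
    · have hcase' : j < (π ⟨m, hm⟩ : ℕ) := by omega
      by_cases hm1 : m = i + 1
      · -- Fishburn violation using the value j - 1
        obtain ⟨r2, hr2n, hr2⟩ := loc (j - 1) (by omega)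
        have hr2m : i + 1 < r2 := by
          by_contra hcon
          push_neg at hcon
          have htri : r2 < i ∨ r2 = i ∨ r2 = i + 1 := by omega
          rcases htri with h | h | h
          · have h1 := claimA r2 hr2n h
            omega
          · have h1 := val_congr π hr2n hin h
            omega
          · have h1 := val_congr π hr2n hm (by omega)
            omega
        refine (hF ⟨i, r2, hr2m, hr2n, ?_, ?_, ?_⟩).elim
        · show π ⟨i, hin⟩ < π ⟨i + 1, by omega⟩
          rw [Fin.lt_def]
          have h1 := val_congr π (show i + 1 < n by omega) hm (by omega)
          omega
        · show π ⟨r2, hr2n⟩ < π ⟨i, hin⟩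
          rw [Fin.lt_def]
          omega
        · show (π ⟨i, hin⟩ : ℕ) = (π ⟨r2, hr2n⟩ : ℕ) + 1
          omega
      · -- 3142 pattern at i < i+1 < m < r
        have hp : i + 1 < n := by omega
        have hc1 := IH (i + 1) (by omega) hp (by omega) (by omega)
        exact absurd (contains3142 π ⟨i, hin⟩ ⟨i + 1, hp⟩ ⟨m, hm⟩ ⟨r, hrn⟩
          (Fin.mk_lt_mk.mpr (by omega)) (Fin.mk_lt_mk.mpr (by omega))
          (Fin.mk_lt_mk.mpr (by omega)) (by omega) (by omega) (by omega)) h3142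
  -- Claim D: positions beyond j are fixed
  have claimD : ∀ m, ∀ hm : m < n, j < m → (π ⟨m, hm⟩ : ℕ) = m := by
    intro m
    induction m using Nat.strong_induction_on with
    | _ m IH =>
    intro hm hjm
    have hwn : (π ⟨m, hm⟩ : ℕ) < n := (π ⟨m, hm⟩).isLt
    have hge : m ≤ (π ⟨m, hm⟩ : ℕ) := by
      by_contra hc
      push_neg at hc
      rcases Nat.lt_or_ge (π ⟨m, hm⟩ : ℕ) i with h1 | h1
      · have h2 := claimA _ hwn h1
        have h3 := inj _ m hwn hm h2
        omega
      rcases Nat.lt_or_ge (π ⟨m, hm⟩ : ℕ) j with h2 | h2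
      · have hvn : (π ⟨m, hm⟩ : ℕ) + 1 < n := by omega
        have h3 := claimC _ hvn (by omega) (by omega)
        have h4 := inj _ m hvn hm (by omega)
        omega
      rcases Nat.eq_or_lt_of_le h2 with h3 | h3
      · have h4 := inj m i hm hin (by omega)
        omega
      · have h4 := IH _ hc hwn h3
        have h5 := inj _ m hwn hm h4
        omega
    by_cases heq : (π ⟨m, hm⟩ : ℕ) = m
    · exact heq
    have hgt : m < (π ⟨m, hm⟩ : ℕ) := by omega
    obtain ⟨r, hrn, hr⟩ := loc m hm
    have hrm : m < r := by
      by_contra hcon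
      push_neg at hcon
      have htri : r < i ∨ r = i ∨ (i < r ∧ r ≤ j) ∨ (j < r ∧ r < m) ∨ r = m := by omega
      rcases htri with h | h | ⟨h1, h2⟩ | ⟨h1, h2⟩ | h
      · have h1 := claimA r hrn h
        omega
      · have h1 := val_congr π hrn hin h
        omega
      · have h3 := claimC r hrn h1 h2
        omega
      · have h3 := IH r h2 hrn h1
        omega
      · have h1 := val_congr π hrn hm h
        omega
    have hp : i + 1 < n := by omega
    have hc1 := claimC (i + 1) hp (by omega) (by omega)
    exact absurd (contains2143 π ⟨i, hin⟩ ⟨i + 1, hp⟩ ⟨m, hm⟩ ⟨r, hrn⟩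
      (Fin.mk_lt_mk.mpr (by omega)) (Fin.mk_lt_mk.mpr (by omega))
      (Fin.mk_lt_mk.mpr (by omega)) (by omega) (by omega) (by omega)) h2143
  -- assemble
  refine ⟨i, j, hij, hjn, ?_⟩
  ext k
  rcases k with ⟨k, hk⟩
  have hv := sig_val n i j hij hjn ⟨k, hk⟩
  rw [hv]
  simp only
  split_ifs with h1 h2
  · have := val_congr π hk hin h1
    omega
  · exact claimC k hk h2.1 h2.2
  · rcases Nat.lt_or_ge k i with h3 | h3
    · exact claimA k hk h3
    · have h4 : j < k := by omega
      exact claimD k hk h4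

theorem fishburn_321_3142_2143 (n : ℕ) :
    {π : Equiv.Perm (Fin n) | IsFishburn π ∧ Avoids π ![3, 2, 1] ∧ Avoids π ![3, 1, 4, 2] ∧ Avoids π ![2, 1, 4, 3]}.ncard = n.choose 2 + 1 := by
  classical
  set F : {p : Fin n × Fin n // p.1 < p.2} → Equiv.Perm (Fin n) :=
    fun p => sig n p.1.1 p.1.2 p.2 p.1.2.isLt with hF_def
  have hset : {π : Equiv.Perm (Fin n) | IsFishburn π ∧ Avoids π ![3, 2, 1] ∧
      Avoids π ![3, 1, 4, 2] ∧ Avoids π ![2, 1, 4, 3]}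
      = insert (1 : Equiv.Perm (Fin n)) (Set.range F) := by
    ext π
    simp only [Set.mem_setOf_eq, Set.mem_insert_iff, Set.mem_range]
    constructor
    · rintro ⟨h1, h2, h3, h4⟩
      rcases mem_char π h1 h2 h3 h4 with h | ⟨i, j, hij, hj, h⟩
      · exact Or.inl h
      · exact Or.inr ⟨⟨(⟨i, by omega⟩, ⟨j, hj⟩), hij⟩, h.symm⟩
    · rintro (h | ⟨⟨⟨a, b⟩, hab⟩, h⟩)
      · subst h; exact one_mem
      · subst h; exact sig_mem hab b.isLt
  rw [hset]
  have hnm : (1 : Equiv.Perm (Fin n)) ∉ Set.range F := by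
    rintro ⟨⟨⟨a, b⟩, hab⟩, h⟩
    have h2 := congrArg (fun σ : Equiv.Perm (Fin n) => (σ a : ℕ)) h
    simp only [hF_def, Equiv.Perm.coe_one, id_eq] at h2
    rw [sig_val] at h2
    rw [if_pos rfl] at h2
    have hab' : (a : ℕ) < (b : ℕ) := hab
    omega
  have hinj : Function.Injective F := by
    rintro ⟨⟨a, b⟩, hab⟩ ⟨⟨c, d⟩, hcd⟩ h
    simp only [hF_def] at h
    have key : ∀ x : Fin n, ((sig n a.1 b.1 hab b.isLt) x : ℕ) = ((sig n c.1 d.1 hcd d.isLt) x : ℕ) :=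
      fun x => congrArg Fin.val (congrFun (congrArg (fun e => e.toFun) h) x)
    have hab' : (a : ℕ) < (b : ℕ) := hab
    have hcd' : (c : ℕ) < (d : ℕ) := hcd
    have hbn := b.isLt
    have hdn := d.isLt
    have hac : (a : ℕ) = (c : ℕ) := by
      rcases lt_trichotomy (a : ℕ) (c : ℕ) with hlt | he | hgt
      · exfalso
        have h1 := key a
        rw [sig_val, sig_val] at h1
        split_ifs at h1 <;> omega
      · exact he
      · exfalso
        have h1 := key c
        rw [sig_val, sig_val] at h1
        split_ifs at h1 <;> omega
    have hbd : (b : ℕ) = (d : ℕ) := by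
      have h1 := key a
      rw [sig_val, sig_val] at h1
      split_ifs at h1 <;> omega
    exact Subtype.ext (Prod.ext (Fin.ext hac) (Fin.ext hbd))
  have hcard : Nat.card {p : Fin n × Fin n // p.1 < p.2} = n.choose 2 := by
    have e : {p : Fin n × Fin n // p.1 < p.2} ≃ (Σ b : Fin n, Fin b.val) :=
      { toFun := fun p => ⟨p.1.2, ⟨p.1.1.val, p.2⟩⟩
        invFun := fun s => ⟨(⟨s.2.val, by have h1 := s.2.isLt; have h2 := s.1.isLt; omega⟩, s.1), s.2.isLt⟩
        left_inv := fun p => rfl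
        right_inv := fun s => rfl }
    rw [Nat.card_eq_fintype_card, Fintype.card_congr e, Fintype.card_sigma]
    simp only [Fintype.card_fin]
    rw [Fin.sum_univ_eq_sum_range (fun i => i) n]
    rw [Nat.choose_two_right]
    have h2 := Finset.sum_range_id_mul_two n
    omega
  rw [Set.ncard_insert_of_notMem hnm (Set.toFinite _), ← Set.image_univ,
    Set.ncard_image_of_injective _ hinj, Set.ncard_univ, hcard]
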